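/- Let n ≥ 2 and let h : {1,…,n} → {1,…,n} be a Hessenberg function. For 0 ≤ i ≤ 2n−3 set q_H(i) = |{(k,j) ∈ {1,…,n} × {1,…,n} : 2 ≤ k ≤ h(n+1−j) and j + k − 3 = i}|. Then the following identity of polynomials in one variable t holds: ∑_{w ∈ S_n, w⁻¹(1) ≤ h(w⁻¹(n))} t^{2ℓ(w)} = (∑_{i=0}^{2n−3} q_H(i)·t^{2i}) · ∏_{ℓ=1}^{n−3} (1 + t² + … + t^{2ℓ}), where the product over ℓ is empty (hence equal to 1) when n ≤ 3. -/

import Mathlib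

open Polynomial

/-- Number of inversions of a permutation of {1,…,n} (encoded on `Fin n`):
`ℓ(w) = |{(a,b) : a < b, w(a) > w(b)}|`. -/
def invCount {n : ℕ} (w : Equiv.Perm (Fin n)) : ℕ :=
  (Finset.univ.filter (fun p : Fin n × Fin n => p.1 < p.2 ∧ w p.2 < w p.1)).card

namespace Stmt2Aux

variable {m : ℕ}

def insTop (p : Fin (m+1)) (u : Equiv.Perm (Fin m)) : Equiv.Perm (Fin (m+1)) :=
  (finSuccEquiv' p).trans ((Equiv.optionCongr u).trans (finSuccEquiv' (Fin.last m)).symm)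

@[simp] lemma insTop_apply_self (p : Fin (m+1)) (u : Equiv.Perm (Fin m)) :
    insTop p u p = Fin.last m := by
  simp [insTop, finSuccEquiv'_at, finSuccEquiv'_symm_none]

@[simp] lemma insTop_apply_succAbove (p : Fin (m+1)) (u : Equiv.Perm (Fin m)) (i : Fin m) :
    insTop p u (p.succAbove i) = (u i).castSucc := by
  simp [insTop, finSuccEquiv'_succAbove, finSuccEquiv'_symm_some]

def insBot (q : Fin (m+1)) (u : Equiv.Perm (Fin m)) : Equiv.Perm (Fin (m+1)) :=
  (finSuccEquiv' q).trans ((Equiv.optionCongr u).trans (finSuccEquiv' 0).symm)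

@[simp] lemma insBot_apply_self (q : Fin (m+1)) (u : Equiv.Perm (Fin m)) :
    insBot q u q = 0 := by
  simp [insBot, finSuccEquiv'_at, finSuccEquiv'_symm_none]

@[simp] lemma insBot_apply_succAbove (q : Fin (m+1)) (u : Equiv.Perm (Fin m)) (i : Fin m) :
    insBot q u (q.succAbove i) = (u i).succ := by
  simp [insBot, finSuccEquiv'_succAbove, finSuccEquiv'_symm_some]

lemma coe_succAbove (p : Fin (m+1)) (j : Fin m) :
    ((p.succAbove j : Fin (m+1)) : ℕ) = if (j:ℕ) < (p:ℕ) then (j:ℕ) else (j:ℕ)+1 := by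
  rcases lt_or_ge (Fin.castSucc j) p with hc | hc
  · rw [Fin.succAbove_of_castSucc_lt _ _ hc, Fin.coe_castSucc,
      if_pos (by simpa [Fin.lt_def] using hc)]
  · rw [Fin.succAbove_of_le_castSucc _ _ hc, Fin.val_succ,
      if_neg (by simp only [Fin.le_def, Fin.coe_castSucc] at hc; omega)]

lemma invCount_eq_sum {k : ℕ} (w : Equiv.Perm (Fin k)) :
    invCount w = ∑ a : Fin k, ∑ b : Fin k, if a < b ∧ w b < w a then 1 else 0 := by
  rw [invCount, Finset.card_filter]
  exact Fintype.sum_prod_type (f := fun p : Fin k × Fin k => if p.1 < p.2 ∧ w p.2 < w p.1 then (1:ℕ) else 0)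

lemma invCount_insTop (p : Fin (m+1)) (u : Equiv.Perm (Fin m)) :
    invCount (insTop p u) = (m - (p:ℕ)) + invCount u := by
  rw [invCount_eq_sum, invCount_eq_sum]
  rw [Fin.sum_univ_succAbove _ p]
  have h1 : ∑ b : Fin (m+1), (if p < b ∧ insTop p u b < insTop p u p then 1 else 0)
      = m - (p:ℕ) := by
    rw [Fin.sum_univ_succAbove _ p]
    have h0 : (if p < p ∧ insTop p u p < insTop p u p then 1 else 0) = 0 := by simp
    rw [h0, zero_add]
    have : ∀ i : Fin m, (if p < p.succAbove i ∧ insTop p u (p.succAbove i) < insTop p u p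
        then 1 else 0) = if (p:ℕ) ≤ (i:ℕ) then 1 else 0 := by
      intro i
      have hlt : insTop p u (p.succAbove i) < insTop p u p := by
        rw [insTop_apply_self, insTop_apply_succAbove]
        exact Fin.castSucc_lt_last _
      have : p < p.succAbove i ↔ (p:ℕ) ≤ (i:ℕ) := by
        rw [Fin.lt_iff_val_lt_val, coe_succAbove]
        split <;> omega
      simp [hlt, this, Fin.castSucc_lt_last]
    rw [Finset.sum_congr rfl (fun i _ => this i)]
    rw [Fin.sum_univ_eq_sum_range (fun j => if (p:ℕ) ≤ j then 1 else 0)]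
    rw [← Finset.card_filter]
    have : (Finset.range m).filter (fun j => (p:ℕ) ≤ j) = Finset.Ico (p:ℕ) m := by
      ext j; simp [Finset.mem_filter, Finset.mem_Ico, Finset.mem_range, and_comm]
    rw [this, Nat.card_Ico]
  rw [h1]
  congr 1
  apply Finset.sum_congr rfl
  intro i _
  rw [Fin.sum_univ_succAbove _ p]
  have h2 : (if p.succAbove i < p ∧ insTop p u p < insTop p u (p.succAbove i) then 1 else 0)
      = 0 := by
    have : ¬ insTop p u p < insTop p u (p.succAbove i) := by
      rw [insTop_apply_self, insTop_apply_succAbove]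
      exact not_lt.mpr (Fin.le_last _)
    simp [this]
    intro _
    exact Fin.le_last _
  rw [h2, zero_add]
  apply Finset.sum_congr rfl
  intro j _
  have e1 : p.succAbove i < p.succAbove j ↔ i < j := Fin.succAbove_lt_succAbove_iff
  rw [insTop_apply_succAbove, insTop_apply_succAbove]
  simp [e1, Fin.castSucc_lt_castSucc_iff]

lemma invCount_insBot (q : Fin (m+1)) (u : Equiv.Perm (Fin m)) :
    invCount (insBot q u) = (q:ℕ) + invCount u := by
  rw [invCount_eq_sum, invCount_eq_sum]
  have key : ∀ a : Fin (m+1), ∑ b : Fin (m+1),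
      (if a < b ∧ insBot q u b < insBot q u a then 1 else 0)
      = (if a < q ∧ insBot q u q < insBot q u a then 1 else 0) +
        ∑ j : Fin m, (if a < q.succAbove j ∧ insBot q u (q.succAbove j) < insBot q u a
          then 1 else 0) := fun a => Fin.sum_univ_succAbove _ q
  rw [Fin.sum_univ_succAbove _ q]
  have h1 : ∑ b : Fin (m+1), (if q < b ∧ insBot q u b < insBot q u q then 1 else 0) = 0 := by
    apply Finset.sum_eq_zero
    intro b _
    have : ¬ insBot q u b < insBot q u q := by
      rw [insBot_apply_self]; exact Fin.not_lt_zero _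
    simp [this]
  rw [h1, zero_add]
  have h2 : ∀ i : Fin m, ∑ b : Fin (m+1),
      (if q.succAbove i < b ∧ insBot q u b < insBot q u (q.succAbove i) then 1 else 0)
      = (if (i:ℕ) < (q:ℕ) then 1 else 0) +
        ∑ j : Fin m, (if i < j ∧ u j < u i then 1 else 0) := by
    intro i
    rw [key (q.succAbove i)]
    congr 1
    · have hlt : insBot q u q < insBot q u (q.succAbove i) := by
        rw [insBot_apply_self, insBot_apply_succAbove]
        exact Fin.succ_pos _
      have : q.succAbove i < q ↔ (i:ℕ) < (q:ℕ) := by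
        rw [Fin.lt_iff_val_lt_val, coe_succAbove]
        split <;> omega
      simp [hlt, this]
    · apply Finset.sum_congr rfl
      intro j _
      have e1 : q.succAbove i < q.succAbove j ↔ i < j := Fin.succAbove_lt_succAbove_iff
      rw [insBot_apply_succAbove, insBot_apply_succAbove]
      simp [e1, Fin.succ_lt_succ_iff]
  rw [Finset.sum_congr rfl (fun i _ => h2 i), Finset.sum_add_distrib]
  congr 1
  rw [Fin.sum_univ_eq_sum_range (fun j => if j < (q:ℕ) then 1 else 0)]
  rw [← Finset.card_filter]
  have : (Finset.range m).filter (fun j => j < (q:ℕ)) = Finset.range (q:ℕ) := by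
    ext j
    simp only [Finset.mem_filter, Finset.mem_range]
    have := q.isLt
    omega
  rw [this, Finset.card_range]

end Stmt2Aux

namespace Stmt2Aux

lemma insTop_bijective :
    Function.Bijective (fun pu : Fin (m+1) × Equiv.Perm (Fin m) => insTop pu.1 pu.2) := by
  rw [Fintype.bijective_iff_injective_and_card]
  constructor
  · rintro ⟨p, u⟩ ⟨p', u'⟩ hEq
    simp only at hEq
    have hp : p = p' := by
      have h1 : insTop p u p = Fin.last m := insTop_apply_self p u
      have h2 : insTop p u p' = Fin.last m := by rw [hEq]; exact insTop_apply_self p' u'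
      exact (insTop p u).injective (h1.trans h2.symm)
    subst hp
    have hu : u = u' := by
      ext i
      have h3 : insTop p u (p.succAbove i) = insTop p u' (p.succAbove i) := by rw [hEq]
      rw [insTop_apply_succAbove, insTop_apply_succAbove] at h3
      exact Fin.val_eq_of_eq (Fin.castSucc_injective _ h3)
    rw [hu]
  · rw [Fintype.card_prod, Fintype.card_perm, Fintype.card_perm,
      Fintype.card_fin, Fintype.card_fin, Nat.factorial_succ]

lemma insBot_bijective :
    Function.Bijective (fun pu : Fin (m+1) × Equiv.Perm (Fin m) => insBot pu.1 pu.2) := by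
  rw [Fintype.bijective_iff_injective_and_card]
  constructor
  · rintro ⟨p, u⟩ ⟨p', u'⟩ hEq
    simp only at hEq
    have hp : p = p' := by
      have h1 : insBot p u p = 0 := insBot_apply_self p u
      have h2 : insBot p u p' = 0 := by rw [hEq]; exact insBot_apply_self p' u'
      exact (insBot p u).injective (h1.trans h2.symm)
    subst hp
    have hu : u = u' := by
      ext i
      have h3 : insBot p u (p.succAbove i) = insBot p u' (p.succAbove i) := by rw [hEq]
      rw [insBot_apply_succAbove, insBot_apply_succAbove] at h3
      exact Fin.val_eq_of_eq (Fin.succ_injective _ h3)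
    rw [hu]
  · rw [Fintype.card_prod, Fintype.card_perm, Fintype.card_perm,
      Fintype.card_fin, Fintype.card_fin, Nat.factorial_succ]

lemma sum_perm_eq_top {M : Type*} [AddCommMonoid M] (f : Equiv.Perm (Fin (m+1)) → M) :
    ∑ w : Equiv.Perm (Fin (m+1)), f w
      = ∑ p : Fin (m+1), ∑ u : Equiv.Perm (Fin m), f (insTop p u) := by
  have h1 := Fintype.sum_bijective _ insTop_bijective
    (fun pu : Fin (m+1) × Equiv.Perm (Fin m) => f (insTop pu.1 pu.2)) f (fun pu => rfl)
  rw [← h1]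
  exact Fintype.sum_prod_type
    (f := fun pu : Fin (m+1) × Equiv.Perm (Fin m) => f (insTop pu.1 pu.2))

lemma sum_perm_eq_bot {M : Type*} [AddCommMonoid M] (f : Equiv.Perm (Fin (m+1)) → M) :
    ∑ w : Equiv.Perm (Fin (m+1)), f w
      = ∑ q : Fin (m+1), ∑ u : Equiv.Perm (Fin m), f (insBot q u) := by
  have h1 := Fintype.sum_bijective _ insBot_bijective
    (fun pu : Fin (m+1) × Equiv.Perm (Fin m) => f (insBot pu.1 pu.2)) f (fun pu => rfl)
  rw [← h1]
  exact Fintype.sum_prod_type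
    (f := fun pu : Fin (m+1) × Equiv.Perm (Fin m) => f (insBot pu.1 pu.2))

lemma sum_perm_pow (m : ℕ) :
    ∑ u : Equiv.Perm (Fin m), (X : Polynomial ℤ)^(2 * invCount u)
      = ∏ l ∈ Finset.Icc 1 (m-1), ∑ j ∈ Finset.range (l+1), (X : Polynomial ℤ)^(2*j) := by
  induction m with
  | zero =>
    rw [Finset.Icc_eq_empty (by omega), Finset.prod_empty]
    rw [Finset.univ_unique, Finset.sum_singleton]
    have : invCount (default : Equiv.Perm (Fin 0)) = 0 := by
      simp [invCount]
    rw [this]; ring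
  | succ k ih =>
    rw [sum_perm_eq_top (fun u => (X : Polynomial ℤ)^(2 * invCount u))]
    have step : ∀ p : Fin (k+1),
        ∑ u : Equiv.Perm (Fin k), (X : Polynomial ℤ)^(2 * invCount (insTop p u))
        = (X : Polynomial ℤ)^(2*(k-(p:ℕ))) *
            ∑ u : Equiv.Perm (Fin k), (X : Polynomial ℤ)^(2 * invCount u) := by
      intro p
      rw [Finset.mul_sum]
      apply Finset.sum_congr rfl
      intro u _
      rw [invCount_insTop, ← pow_add]
      congr 1
      ring
    rw [Finset.sum_congr rfl (fun p _ => step p), ← Finset.sum_mul, ih]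
    have hfst : ∑ p : Fin (k+1), (X : Polynomial ℤ)^(2*(k-(p:ℕ)))
        = ∑ j ∈ Finset.range (k+1), (X : Polynomial ℤ)^(2*j) := by
      rw [Fin.sum_univ_eq_sum_range (fun p => (X : Polynomial ℤ)^(2*(k-p)))]
      have := Finset.sum_range_reflect (fun j => (X : Polynomial ℤ)^(2*j)) (k+1)
      simpa using this
    rw [hfst]
    rcases Nat.eq_zero_or_pos k with rfl | hk
    · simp
    · obtain ⟨k', rfl⟩ : ∃ k', k = k'+1 := ⟨k-1, by omega⟩
      rw [show k'+1+1-1 = k'+1 from rfl, Finset.prod_Icc_succ_top (by omega : 1 ≤ k'+1)]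
      rw [show k'+1-1 = k' from rfl]
      ring

end Stmt2Aux

/-- For n ≥ 2 and a Hessenberg function h, with
q_H(i) = |{(k,j) ∈ {1,…,n}² : 2 ≤ k ≤ h(n+1−j), j+k−3 = i}|, one has
∑_{w ∈ S_n, w⁻¹(1) ≤ h(w⁻¹(n))} t^{2ℓ(w)}
  = (∑_{i=0}^{2n−3} q_H(i) t^{2i}) · ∏_{ℓ=1}^{n−3} (1 + t² + … + t^{2ℓ}),
the product being empty when n ≤ 3. Permutations are encoded on `Fin n`, position
j ∈ {1,…,n} corresponding to `⟨j-1,_⟩ : Fin n`; polynomials live in `ℤ[t]`. -/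
theorem stmt_2 (n : ℕ) (hn : 2 ≤ n) (h : ℕ → ℕ)
    (hmono : ∀ i j, 1 ≤ i → i ≤ j → j ≤ n → h i ≤ h j)
    (hdom : ∀ j, 1 ≤ j → j ≤ n → j ≤ h j ∧ h j ≤ n) :
    ∑ w ∈ Finset.univ.filter (fun w : Equiv.Perm (Fin n) =>
        ((w⁻¹ ⟨0, by omega⟩ : Fin n) : ℕ) + 1 ≤
          h (((w⁻¹ ⟨n - 1, by omega⟩ : Fin n) : ℕ) + 1)),
      (X : Polynomial ℤ) ^ (2 * invCount w) =
    (∑ i ∈ Finset.range (2 * n - 2),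
        (C (((((Finset.Icc 1 n) ×ˢ (Finset.Icc 1 n)).filter
            (fun p : ℕ × ℕ => 2 ≤ p.1 ∧ p.1 ≤ h (n + 1 - p.2) ∧ p.2 + p.1 - 3 = i)).card : ℤ))
          * X ^ (2 * i)))
      * ∏ l ∈ Finset.Icc 1 (n - 3), ∑ m ∈ Finset.range (l + 1), (X : Polynomial ℤ) ^ (2 * m) := by
  obtain ⟨m, rfl⟩ : ∃ m, n = m + 2 := ⟨n - 2, by omega⟩
  clear hmono
  rw [Finset.sum_filter]
  rw [Stmt2Aux.sum_perm_eq_top (fun w : Equiv.Perm (Fin (m+2)) =>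
    if ((w⁻¹ ⟨0, by omega⟩ : Fin (m+2)) : ℕ) + 1 ≤
        h (((w⁻¹ ⟨m + 2 - 1, by omega⟩ : Fin (m+2)) : ℕ) + 1)
      then (X : Polynomial ℤ) ^ (2 * invCount w) else 0)]
  -- rewrite each inner sum via the bottom decomposition, and simplify the condition
  have key : ∀ (p : Fin (m+2)) (q : Fin (m+1)) (u : Equiv.Perm (Fin m)),
      (if (((Stmt2Aux.insTop p (Stmt2Aux.insBot q u))⁻¹ ⟨0, by omega⟩ : Fin (m+2)) : ℕ) + 1 ≤
          h ((((Stmt2Aux.insTop p (Stmt2Aux.insBot q u))⁻¹ ⟨m + 2 - 1, by omega⟩ : Fin (m+2)) : ℕ) + 1)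
        then (X : Polynomial ℤ) ^ (2 * invCount (Stmt2Aux.insTop p (Stmt2Aux.insBot q u))) else 0)
      = (if (q : ℕ) + 2 ≤ h ((p : ℕ) + 1)
          then (X : Polynomial ℤ) ^ (2 * ((m + 1 - (p : ℕ)) + (q : ℕ))) else 0)
        * (X : Polynomial ℤ) ^ (2 * invCount u) := by
    intro p q u
    set w := Stmt2Aux.insTop p (Stmt2Aux.insBot q u) with hw
    have hinvtop : (w⁻¹ ⟨m + 2 - 1, by omega⟩ : Fin (m+2)) = p := by
      have h1 : w p = ⟨m + 2 - 1, by omega⟩ := Stmt2Aux.insTop_apply_self p _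
      rw [← h1, Equiv.Perm.coe_inv, Equiv.symm_apply_apply]
    have hinvbot : (w⁻¹ ⟨0, by omega⟩ : Fin (m+2)) = p.succAbove q := by
      have h1 : w (p.succAbove q) = ⟨0, by omega⟩ := by
        rw [hw, Stmt2Aux.insTop_apply_succAbove, Stmt2Aux.insBot_apply_self]
        rfl
      rw [← h1, Equiv.Perm.coe_inv, Equiv.symm_apply_apply]
    rw [hinvtop, hinvbot]
    have hiff : ((p.succAbove q : Fin (m+2)) : ℕ) + 1 ≤ h ((p : ℕ) + 1) ↔
        (q : ℕ) + 2 ≤ h ((p : ℕ) + 1) := by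
      have hcoe := Stmt2Aux.coe_succAbove p q
      have hd := (hdom ((p : ℕ) + 1) (by omega) (by have := p.isLt; omega)).1
      have hq := q.isLt
      rw [hcoe]
      split <;> omega
    rw [if_congr hiff rfl rfl, hw, Stmt2Aux.invCount_insTop, Stmt2Aux.invCount_insBot]
    by_cases hc : (q : ℕ) + 2 ≤ h ((p : ℕ) + 1)
    · rw [if_pos hc, if_pos hc, ← pow_add]
      congr 1
      ring
    · rw [if_neg hc, if_neg hc, zero_mul]
  have step2 : ∀ p : Fin (m+2),
      (∑ v : Equiv.Perm (Fin (m+1)),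
        if (((Stmt2Aux.insTop p v)⁻¹ ⟨0, by omega⟩ : Fin (m+2)) : ℕ) + 1 ≤
            h ((((Stmt2Aux.insTop p v)⁻¹ ⟨m + 2 - 1, by omega⟩ : Fin (m+2)) : ℕ) + 1)
          then (X : Polynomial ℤ) ^ (2 * invCount (Stmt2Aux.insTop p v)) else 0)
      = (∑ q : Fin (m+1), if (q : ℕ) + 2 ≤ h ((p : ℕ) + 1)
            then (X : Polynomial ℤ) ^ (2 * ((m + 1 - (p : ℕ)) + (q : ℕ))) else 0)
        * ∑ u : Equiv.Perm (Fin m), (X : Polynomial ℤ) ^ (2 * invCount u) := by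
    intro p
    rw [Stmt2Aux.sum_perm_eq_bot (fun v : Equiv.Perm (Fin (m+1)) =>
      if (((Stmt2Aux.insTop p v)⁻¹ ⟨0, by omega⟩ : Fin (m+2)) : ℕ) + 1 ≤
          h ((((Stmt2Aux.insTop p v)⁻¹ ⟨m + 2 - 1, by omega⟩ : Fin (m+2)) : ℕ) + 1)
        then (X : Polynomial ℤ) ^ (2 * invCount (Stmt2Aux.insTop p v)) else 0)]
    rw [Finset.sum_mul]
    apply Finset.sum_congr rfl
    intro q _
    rw [Finset.mul_sum]
    apply Finset.sum_congr rfl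
    intro u _
    exact key p q u
  rw [Finset.sum_congr rfl (fun p _ => step2 p), ← Finset.sum_mul,
    Stmt2Aux.sum_perm_pow m]
  rw [show m + 2 - 3 = m - 1 by omega]
  congr 1
  -- identify the double sum with the q_H polynomial
  have hR : (∑ i ∈ Finset.range (2 * (m + 2) - 2),
        (C (((((Finset.Icc 1 (m+2)) ×ˢ (Finset.Icc 1 (m+2))).filter
            (fun p : ℕ × ℕ => 2 ≤ p.1 ∧ p.1 ≤ h (m + 2 + 1 - p.2) ∧ p.2 + p.1 - 3 = i)).card : ℤ))
          * X ^ (2 * i)))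
      = ∑ x ∈ ((Finset.Icc 1 (m+2)) ×ˢ (Finset.Icc 1 (m+2))).filter
            (fun p : ℕ × ℕ => 2 ≤ p.1 ∧ p.1 ≤ h (m + 2 + 1 - p.2)),
          (X : Polynomial ℤ) ^ (2 * (x.2 + x.1 - 3)) := by
    have hfib : ∀ i : ℕ,
        (((Finset.Icc 1 (m+2)) ×ˢ (Finset.Icc 1 (m+2))).filter
            (fun p : ℕ × ℕ => 2 ≤ p.1 ∧ p.1 ≤ h (m + 2 + 1 - p.2) ∧ p.2 + p.1 - 3 = i))
        = (((Finset.Icc 1 (m+2)) ×ˢ (Finset.Icc 1 (m+2))).filter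
            (fun p : ℕ × ℕ => 2 ≤ p.1 ∧ p.1 ≤ h (m + 2 + 1 - p.2))).filter
            (fun p : ℕ × ℕ => p.2 + p.1 - 3 = i) := by
      intro i
      rw [Finset.filter_filter]
      apply Finset.filter_congr
      intro x _
      tauto
    calc ∑ i ∈ Finset.range (2 * (m + 2) - 2),
          (C (((((Finset.Icc 1 (m+2)) ×ˢ (Finset.Icc 1 (m+2))).filter
              (fun p : ℕ × ℕ => 2 ≤ p.1 ∧ p.1 ≤ h (m + 2 + 1 - p.2) ∧ p.2 + p.1 - 3 = i)).card : ℤ))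
            * X ^ (2 * i))
        = ∑ i ∈ Finset.range (2 * (m + 2) - 2),
            ∑ x ∈ (((Finset.Icc 1 (m+2)) ×ˢ (Finset.Icc 1 (m+2))).filter
              (fun p : ℕ × ℕ => 2 ≤ p.1 ∧ p.1 ≤ h (m + 2 + 1 - p.2))).filter
              (fun p : ℕ × ℕ => p.2 + p.1 - 3 = i),
              (X : Polynomial ℤ) ^ (2 * i) := by
          apply Finset.sum_congr rfl
          intro i _
          rw [hfib i, Finset.sum_const, nsmul_eq_mul, map_natCast]
      _ = _ := by
          apply Finset.sum_fiberwise_of_maps_to'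
          intro x hx
          simp only [Finset.mem_filter, Finset.mem_product, Finset.mem_Icc] at hx
          simp only [Finset.mem_range]
          omega
  rw [hR]
  rw [Fin.sum_univ_eq_sum_range (fun p => ∑ q : Fin (m+1),
    if (q : ℕ) + 2 ≤ h (p + 1) then (X : Polynomial ℤ) ^ (2 * ((m + 1 - p) + (q : ℕ))) else 0)]
  rw [Finset.sum_congr rfl (fun p _ => Fin.sum_univ_eq_sum_range
    (fun q => if q + 2 ≤ h (p + 1) then (X : Polynomial ℤ) ^ (2 * ((m + 1 - p) + q)) else 0) (m+1))]
  rw [← Finset.sum_product' (s := Finset.range (m+2)) (t := Finset.range (m+1))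
    (f := fun p q => if q + 2 ≤ h (p + 1) then (X : Polynomial ℤ) ^ (2 * ((m + 1 - p) + q)) else 0)]
  rw [← Finset.sum_filter]
  apply Finset.sum_nbij' (fun x : ℕ × ℕ => (x.2 + 2, m + 2 - x.1))
    (fun y : ℕ × ℕ => (m + 2 - y.2, y.1 - 2))
  · intro a ha
    simp only [Finset.mem_filter, Finset.mem_product, Finset.mem_range] at ha
    simp only [Finset.mem_filter, Finset.mem_product, Finset.mem_Icc]
    have harg : m + 2 + 1 - (m + 2 - a.1) = a.1 + 1 := by omega
    rw [harg]
    have hd := (hdom (a.1 + 1) (by omega) (by omega)).2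
    exact ⟨⟨⟨by omega, by omega⟩, ⟨by omega, by omega⟩⟩, by omega, ha.2⟩
  · intro y hy
    simp only [Finset.mem_filter, Finset.mem_product, Finset.mem_Icc] at hy
    simp only [Finset.mem_filter, Finset.mem_product, Finset.mem_range]
    have harg : m + 2 - y.2 + 1 = m + 2 + 1 - y.2 := by omega
    rw [harg]
    have : y.1 - 2 + 2 = y.1 := by omega
    rw [this]
    exact ⟨⟨by omega, by omega⟩, hy.2.2⟩
  · intro a ha
    simp only [Finset.mem_filter, Finset.mem_product, Finset.mem_range] at ha
    have : (m + 2 - (m + 2 - a.1), a.2 + 2 - 2) = (a.1, a.2) := by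
      refine Prod.ext ?_ ?_ <;> · simp only []; omega
    simpa using this
  · intro y hy
    simp only [Finset.mem_filter, Finset.mem_product, Finset.mem_Icc] at hy
    have : (y.1 - 2 + 2, m + 2 - (m + 2 - y.2)) = (y.1, y.2) := by
      refine Prod.ext ?_ ?_ <;> · simp only []; omega
    simpa using this
  · intro a ha
    simp only [Finset.mem_filter, Finset.mem_product, Finset.mem_range] at ha
    congr 1
    omega
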